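/- (Sinai's Lemma) Let φ : Σ_A → ℝ satisfy var_n(φ) ≤ Cθ^n for some C > 0 and 0 < θ < 1, where var_n(φ) = sup{|φ(x) − φ(y)| : x_k = y_k for all |k| ≤ n}. Then there exist functions φ⁺, γ⁺ : Σ_A → ℝ such that φ⁺ − φ = γ⁺ − γ⁺∘σ, φ⁺ depends only on the coordinates with index > 0 (i.e., φ⁺(x) = φ⁺(y) whenever x_n = y_n for all n > 0), γ⁺ is continuous, and φ⁺ satisfies var_n(φ⁺) ≤ C'θ'^n for some C' > 0 and θ' = √θ. -/

import Mathlib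

/-- The two-sided subshift of finite type determined by a 0-1 matrix `A`. -/
def SigmaA (d : ℕ) (A : Matrix (Fin d) (Fin d) ℕ) : Type :=
  {x : ℤ → Fin d // ∀ n : ℤ, A (x n) (x (n + 1)) = 1}

/-- The shift map on the two-sided subshift. -/
def shiftMap (d : ℕ) (A : Matrix (Fin d) (Fin d) ℕ) : SigmaA d A → SigmaA d A :=
  fun x => ⟨fun n => x.val (n + 1), fun n => by simpa using x.property (n + 1)⟩

instance (d : ℕ) (A : Matrix (Fin d) (Fin d) ℕ) : TopologicalSpace (SigmaA d A) :=
  instTopologicalSpaceSubtype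

namespace SinaiAux

variable {d : ℕ} {A : Matrix (Fin d) (Fin d) ℕ}

lemma shiftMap_val (x : SigmaA d A) (k : ℤ) : (shiftMap d A x).val k = x.val (k + 1) := rfl

lemma iter_val (n : ℕ) (x : SigmaA d A) (k : ℤ) :
    ((shiftMap d A)^[n] x).val k = x.val (k + n) := by
  induction n generalizing x k with
  | zero => simp
  | succ m ih =>
      rw [Function.iterate_succ_apply, ih]
      show x.val (k + m + 1) = x.val (k + (m + 1 : ℕ))
      push_cast
      rw [add_assoc]

lemma cont_val (k : ℤ) : Continuous (fun x : SigmaA d A => x.val k) :=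
  (continuous_apply k).comp continuous_subtype_val

lemma cont_shift : Continuous (shiftMap d A) :=
  Continuous.subtype_mk (continuous_pi fun n => cont_val (n + 1)) _

open Classical in
noncomputable def Ysel (x₀ : SigmaA d A) (a : Fin d) : SigmaA d A :=
  if h : ∃ z : SigmaA d A, z.val 0 = a then h.choose else x₀

lemma Ysel_val0 (x₀ : SigmaA d A) {a : Fin d} (h : ∃ z : SigmaA d A, z.val 0 = a) :
    (Ysel x₀ a).val 0 = a := by
  rw [Ysel]
  split
  · next h' => exact h'.choose_spec
  · next h' => exact absurd h h'

lemma exists_val0 (x : SigmaA d A) (k : ℤ) : ∃ z : SigmaA d A, z.val 0 = x.val k := by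
  refine ⟨⟨fun n => x.val (n + k), fun n => ?_⟩, by simp⟩
  have := x.property (n + k)
  have h : n + k + 1 = n + 1 + k := by ring
  rw [h] at this
  exact this

/-- The map selecting, for each `x`, a point agreeing with `x` on all coordinates `≥ 1`
and depending only on those coordinates. -/
noncomputable def tmap (x₀ : SigmaA d A) (x : SigmaA d A) : SigmaA d A :=
  ⟨fun n => if 1 ≤ n then x.val n else (Ysel x₀ (x.val 1)).val (n - 1), by
    intro n
    dsimp only
    by_cases h1 : 1 ≤ n
    · rw [if_pos h1, if_pos (by omega)]
      exact x.property n
    · rw [if_neg h1]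
      by_cases h0 : n = 0
      · subst h0
        have h2 := (Ysel x₀ (x.val 1)).property (-1)
        rw [show (-1 : ℤ) + 1 = 0 by ring, Ysel_val0 x₀ (exists_val0 x 1)] at h2
        simpa using h2
      · rw [if_neg (by omega)]
        have h2 := (Ysel x₀ (x.val 1)).property (n - 1)
        have h3 : n - 1 + 1 = n := by ring
        rw [h3] at h2
        have h4 : n + 1 - 1 = n := by ring
        rw [h4]
        exact h2⟩

lemma tmap_val_pos (x₀ x : SigmaA d A) {n : ℤ} (h : 1 ≤ n) :
    (tmap x₀ x).val n = x.val n := if_pos h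

lemma tmap_val_nonpos (x₀ x : SigmaA d A) {n : ℤ} (h : ¬ 1 ≤ n) :
    (tmap x₀ x).val n = (Ysel x₀ (x.val 1)).val (n - 1) := if_neg h

lemma tmap_eq (x₀ : SigmaA d A) {x y : SigmaA d A}
    (h : ∀ n : ℤ, 1 ≤ n → x.val n = y.val n) : tmap x₀ x = tmap x₀ y := by
  apply Subtype.ext
  funext n
  show (tmap x₀ x).val n = (tmap x₀ y).val n
  by_cases h1 : 1 ≤ n
  · rw [tmap_val_pos _ _ h1, tmap_val_pos _ _ h1]
    exact h n h1
  · rw [tmap_val_nonpos _ _ h1, tmap_val_nonpos _ _ h1, h 1 le_rfl]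

lemma cont_tmap (x₀ : SigmaA d A) : Continuous (tmap x₀) := by
  apply Continuous.subtype_mk
  apply continuous_pi
  intro n
  by_cases h : 1 ≤ n
  · simp only [if_pos h]
    exact cont_val n
  · simp only [if_neg h]
    exact (continuous_of_discreteTopology :
      Continuous fun a : Fin d => (Ysel x₀ a).val (n - 1)).comp (cont_val 1)

lemma cont_of_var {φ : SigmaA d A → ℝ} {C θ : ℝ} (hθ0 : 0 ≤ θ) (hθ1 : θ < 1)
    (hvar : ∀ (n : ℕ) (x y : SigmaA d A),
      (∀ k : ℤ, |k| ≤ (n : ℤ) → x.val k = y.val k) → |φ x - φ y| ≤ C * θ ^ n) :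
    Continuous φ := by
  rw [continuous_iff_continuousAt]
  intro x
  unfold ContinuousAt
  rw [Metric.tendsto_nhds]
  intro ε hε
  have h0 : Filter.Tendsto (fun n : ℕ => C * θ ^ n) Filter.atTop (nhds 0) := by
    simpa using (tendsto_pow_atTop_nhds_zero_of_lt_one hθ0 hθ1).const_mul C
  obtain ⟨n, hn⟩ := (h0.eventually_lt_const hε).exists
  have hopen : IsOpen {y : SigmaA d A | ∀ k ∈ Finset.Icc (-(n : ℤ)) n, y.val k = x.val k} := by
    have heq : {y : SigmaA d A | ∀ k ∈ Finset.Icc (-(n : ℤ)) n, y.val k = x.val k}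
        = ⋂ k ∈ Finset.Icc (-(n : ℤ)) n, {y : SigmaA d A | y.val k = x.val k} := by
      ext y; simp
    rw [heq]
    exact isOpen_biInter_finset fun k _ =>
      (isOpen_discrete {x.val k}).preimage (cont_val k)
  filter_upwards [hopen.mem_nhds (fun k _ => rfl)] with y hy
  rw [Real.dist_eq]
  calc |φ y - φ x| ≤ C * θ ^ n := by
        apply hvar n y x
        intro k hk
        rw [abs_le] at hk
        exact hy k (Finset.mem_Icc.mpr ⟨hk.1, hk.2⟩)
    _ < ε := hn

end SinaiAux

set_option maxHeartbeats 4000000 in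
/-- Sinai's Lemma: if `var_n(φ) ≤ C θ^n` with `C > 0`, `0 < θ < 1`, then
there are `φ⁺, γ⁺` with `φ⁺ − φ = γ⁺ − γ⁺∘σ`, `φ⁺` depending only on the coordinates of
index `> 0`, `γ⁺` continuous, and `var_n(φ⁺) ≤ C' (√θ)^n` for some `C' > 0`. -/
theorem sinai_lemma (d : ℕ) (A : Matrix (Fin d) (Fin d) ℕ)
    (φ : SigmaA d A → ℝ) (C θ : ℝ) (hC : 0 < C) (hθ0 : 0 < θ) (hθ1 : θ < 1)
    (hvar : ∀ (n : ℕ) (x y : SigmaA d A),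
      (∀ k : ℤ, |k| ≤ (n : ℤ) → x.val k = y.val k) → |φ x - φ y| ≤ C * θ ^ n) :
    ∃ (φp γp : SigmaA d A → ℝ),
      (∀ x, φp x - φ x = γp x - γp (shiftMap d A x)) ∧
      (∀ x y : SigmaA d A, (∀ n : ℤ, 0 < n → x.val n = y.val n) → φp x = φp y) ∧
      Continuous γp ∧
      (∃ C' : ℝ, 0 < C' ∧ ∀ (n : ℕ) (x y : SigmaA d A),
        (∀ k : ℤ, |k| ≤ (n : ℤ) → x.val k = y.val k) →
          |φp x - φp y| ≤ C' * (Real.sqrt θ) ^ n) := by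
  classical
  by_cases hne : Nonempty (SigmaA d A)
  · obtain ⟨x₀⟩ := hne
    -- compactness and boundedness of φ
    have hφc : Continuous φ := SinaiAux.cont_of_var hθ0.le hθ1 hvar
    have hcs : CompactSpace (SigmaA d A) := by
      have h1 : IsClosed {x : ℤ → Fin d | ∀ n : ℤ, A (x n) (x (n + 1)) = 1} := by
        have heq : {x : ℤ → Fin d | ∀ n : ℤ, A (x n) (x (n + 1)) = 1}
            = ⋂ n : ℤ, (fun x : ℤ → Fin d => A (x n) (x (n + 1))) ⁻¹' {1} := by
          ext x; simp
        rw [heq]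
        refine isClosed_iInter fun n => IsClosed.preimage ?_ isClosed_singleton
        have h1 : Continuous fun x : ℤ → Fin d => ((x n, x (n + 1)) : Fin d × Fin d) :=
          (continuous_apply n).prodMk (continuous_apply (n + 1))
        exact (continuous_of_discreteTopology
          (f := fun p : Fin d × Fin d => A p.1 p.2)).comp h1
      exact isCompact_iff_compactSpace.mp h1.isCompact
    obtain ⟨z, -, hz⟩ := isCompact_univ.exists_isMaxOn (⟨x₀, Set.mem_univ x₀⟩ :
      (Set.univ : Set (SigmaA d A)).Nonempty) (hφc.abs.continuousOn)
    have hM : ∀ w : SigmaA d A, |φ w| ≤ |φ z| := fun w => hz (Set.mem_univ w)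
    have hM0 : (0:ℝ) ≤ |φ z| := abs_nonneg _
    -- the shift and the selection map
    set S := shiftMap d A with hSdef
    set T := SinaiAux.tmap x₀ with hTdef
    have iterv : ∀ (m : ℕ) (x : SigmaA d A) (k : ℤ), (S^[m] x).val k = x.val (k + m) := by
      rw [hSdef]; exact SinaiAux.iter_val
    have Sval : ∀ (x : SigmaA d A) (k : ℤ), (S x).val k = x.val (k + 1) := by
      rw [hSdef]; exact SinaiAux.shiftMap_val
    have Tpos : ∀ (x : SigmaA d A) {m : ℤ}, 1 ≤ m → (T x).val m = x.val m := by
      rw [hTdef]; exact fun x {m} hm => SinaiAux.tmap_val_pos x₀ x hm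
    have Tnonpos : ∀ (x : SigmaA d A) {m : ℤ}, ¬ 1 ≤ m →
        (T x).val m = (SinaiAux.Ysel x₀ (x.val 1)).val (m - 1) := by
      rw [hTdef]; exact fun x {m} hm => SinaiAux.tmap_val_nonpos x₀ x hm
    have Teq : ∀ {x y : SigmaA d A}, (∀ m : ℤ, 1 ≤ m → x.val m = y.val m) → T x = T y := by
      rw [hTdef]; exact fun {x y} h => SinaiAux.tmap_eq x₀ h
    have hTc : Continuous T := by rw [hTdef]; exact SinaiAux.cont_tmap x₀
    have hSc : Continuous S := by rw [hSdef]; exact SinaiAux.cont_shift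
    -- the two sequences of functions
    set e : ℕ → SigmaA d A → ℝ :=
      fun m x => φ (S^[m+1] (T x)) - φ (S^[m] (T (S x))) with hedef
    set b : ℕ → SigmaA d A → ℝ :=
      fun m x => φ (S^[m+1] (T x)) - φ (S^[m+1] x) with hbdef
    have hee : ∀ m x, e m x = φ (S^[m+1] (T x)) - φ (S^[m] (T (S x))) := fun m x => by
      rw [hedef]
    have hbb : ∀ m x, b m x = φ (S^[m+1] (T x)) - φ (S^[m+1] x) := fun m x => by
      rw [hbdef]
    -- agreement transfer lemmas
    have agreeIter : ∀ (j m : ℕ) (u v : SigmaA d A),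
        (∀ k : ℤ, |k| ≤ (m : ℤ) + j → u.val k = v.val k) →
        ∀ k : ℤ, |k| ≤ (m : ℤ) → (S^[j] u).val k = (S^[j] v).val k := by
      intro j m u v h k hk
      rw [iterv, iterv]
      apply h
      rw [abs_le] at hk ⊢
      omega
    have agreeT : ∀ (m : ℕ), 1 ≤ m → ∀ (u v : SigmaA d A),
        (∀ k : ℤ, |k| ≤ (m : ℤ) → u.val k = v.val k) →
        ∀ k : ℤ, |k| ≤ (m : ℤ) → (T u).val k = (T v).val k := by
      intro m hm u v h k hk
      by_cases h1 : 1 ≤ k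
      · rw [Tpos u h1, Tpos v h1]; exact h k hk
      · rw [Tnonpos u h1, Tnonpos v h1, h 1 (by rw [abs_le]; omega)]
    -- bounds and summability
    have hgeo : Summable (fun m : ℕ => C * θ ^ m) :=
      (summable_geometric_of_lt_one hθ0.le hθ1).mul_left C
    have hbB : ∀ m x, |b m x| ≤ C * θ ^ m := by
      intro m x
      rw [hbb]
      apply hvar
      intro k hk
      rw [abs_le] at hk
      rw [iterv, iterv, Tpos _ (by push_cast; omega)]
    have heB : ∀ m x, |e (m+1) x| ≤ C * θ ^ m := by
      intro m x
      rw [hee]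
      apply hvar
      intro k hk
      rw [abs_le] at hk
      rw [iterv, iterv, Tpos _ (by push_cast; omega), Tpos _ (by push_cast; omega), Sval]
      congr 1
      push_cast
      ring
    have hbS : ∀ x, Summable fun m => b m x := fun x =>
      Summable.of_norm_bounded hgeo (fun m => by rw [Real.norm_eq_abs]; exact hbB m x)
    have heS : ∀ x, Summable fun m => e (m+1) x := fun x =>
      Summable.of_norm_bounded hgeo (fun m => by rw [Real.norm_eq_abs]; exact heB m x)
    -- the maps
    set Φ : SigmaA d A → ℝ := fun x => φ (T x) + e 0 x + ∑' m, e (m+1) x with hPdef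
    set Γ : SigmaA d A → ℝ := fun x => (φ (T x) - φ x) + ∑' m, b m x with hGdef
    have hPP : ∀ x, Φ x = φ (T x) + e 0 x + ∑' m, e (m+1) x := fun x => by rw [hPdef]
    have hGG : ∀ x, Γ x = (φ (T x) - φ x) + ∑' m, b m x := fun x => by rw [hGdef]
    -- constants
    have hJ0 : (0:ℝ) < (1-θ)⁻¹ := inv_pos.mpr (by linarith)
    have htsum : ∑' m : ℕ, C * θ ^ m = C * (1-θ)⁻¹ := by
      rw [tsum_mul_left, tsum_geometric_of_lt_one hθ0.le hθ1]
    set s := Real.sqrt θ with hsdef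
    have hs0 : 0 < s := Real.sqrt_pos.mpr hθ0
    have hs1 : s < 1 := by
      rw [hsdef, show (1:ℝ) = Real.sqrt 1 by simp]
      exact Real.sqrt_lt_sqrt hθ0.le (by simpa using hθ1)
    have hpow : ∀ a c : ℕ, c ≤ 2*a → θ ^ a ≤ s ^ c := by
      intro a c h
      have h2 : θ ^ a = s ^ (2*a) := by
        rw [pow_mul, hsdef, Real.sq_sqrt hθ0.le]
      rw [h2]
      exact pow_le_pow_of_le_one hs0.le hs1.le h
    set U : ℝ := 6*|φ z| + 2*(C*(1-θ)⁻¹) with hUdef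
    set V : ℝ := 3*C + 2*(C*(1-θ)⁻¹)/θ + 2*(C*(1-θ)⁻¹)/s with hVdef
    have hU0 : 0 < U := by
      rw [hUdef]
      have := mul_pos hC hJ0
      linarith
    have hV0 : 0 < V := by
      rw [hVdef]
      have h1 := mul_pos hC hJ0
      have h2 : 0 ≤ 2*(C*(1-θ)⁻¹)/θ := by positivity
      have h3 : 0 ≤ 2*(C*(1-θ)⁻¹)/s := by positivity
      linarith
    have hC'0 : 0 < U/s + V := add_pos (div_pos hU0 hs0) hV0
    refine ⟨Φ, Γ, ?_, ?_, ?_, U/s + V, hC'0, ?_⟩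
    -- 1: coboundary identity
    · intro x
      have hsb1 : Summable fun m => b (m+1) x := (summable_nat_add_iff 1).mpr (hbS x)
      have hkey : ∀ m, b m x - b m (S x) = e (m+1) x + (b m x - b (m+1) x) := by
        intro m
        rw [hbb, hbb, hbb, hee]
        rw [← Function.iterate_succ_apply S (m+1) x]
        ring
      have hΔ : (∑' m, b m x) - (∑' m, b m (S x)) = (∑' m, e (m+1) x) + b 0 x := by
        rw [← Summable.tsum_sub (hbS x) (hbS (S x)), tsum_congr hkey,
            Summable.tsum_add (heS x) ((hbS x).sub hsb1), Summable.tsum_sub (hbS x) hsb1,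
            Summable.tsum_eq_zero_add (hbS x)]
        ring
      have he0 : e 0 x = b 0 x + φ (S x) - φ (T (S x)) := by
        rw [hee, hbb]
        simp only [zero_add, Function.iterate_one, Function.iterate_zero_apply]
        ring
      rw [hPP, hGG, hGG]
      linarith [hΔ, he0]
    -- 2: dependence only on coordinates of positive index
    · intro x y h
      have h1 : T x = T y := Teq (fun m hm => h m (by omega))
      have h2 : T (S x) = T (S y) := Teq (fun m hm => by
        rw [Sval, Sval]; exact h (m+1) (by omega))
      have he3 : ∀ m, e m x = e m y := by
        intro m; rw [hee, hee, h1, h2]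
      rw [hPP, hPP, h1, he3 0, tsum_congr (fun m => he3 (m+1))]
    -- 3: continuity of Γ
    · have hcont : ∀ m : ℕ, Continuous fun x => b m x := by
        intro m
        have hfun : (fun x => b m x) = fun x => φ (S^[m+1] (T x)) - φ (S^[m+1] x) := by
          funext x; exact hbb m x
        rw [hfun]
        exact (hφc.comp ((hSc.iterate (m+1)).comp hTc)).sub (hφc.comp (hSc.iterate (m+1)))
      have : Γ = fun x => (φ (T x) - φ x) + ∑' m, b m x := by funext x; exact hGG x
      rw [this]
      exact Continuous.add ((hφc.comp hTc).sub hφc)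
        (continuous_tsum hcont hgeo (fun m x => by rw [Real.norm_eq_abs]; exact hbB m x))
    -- 4: the variation bound
    · intro n x y hxy
      have habs_tsum : ∀ (f : ℕ → ℝ), Summable f → |∑' m, f m| ≤ ∑' m, |f m| := by
        intro f hf
        have h := norm_tsum_le_tsum_norm (f := f) (by simpa [Real.norm_eq_abs] using hf.abs)
        simpa [Real.norm_eq_abs] using h
      have hgsum : Summable (fun m => e (m+1) x - e (m+1) y) := (heS x).sub (heS y)
      have hsplit : Φ x - Φ y = (φ (T x) - φ (T y)) + (e 0 x - e 0 y)
          + ∑' m, (e (m+1) x - e (m+1) y) := by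
        rw [hPP, hPP, Summable.tsum_sub (heS x) (heS y)]
        ring
      have habs : |Φ x - Φ y| ≤ |φ (T x) - φ (T y)| + |e 0 x - e 0 y|
          + |∑' m, (e (m+1) x - e (m+1) y)| := by
        rw [hsplit]; exact abs_add_three _ _ _
      have htail_all : |∑' m, (e (m+1) x - e (m+1) y)| ≤ 2*(C*(1-θ)⁻¹) := by
        calc |∑' m, (e (m+1) x - e (m+1) y)| ≤ ∑' m, |e (m+1) x - e (m+1) y| :=
              habs_tsum _ hgsum
          _ ≤ ∑' m : ℕ, 2*(C*θ^m) := by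
              refine Summable.tsum_le_tsum (fun m => ?_) hgsum.abs (hgeo.mul_left 2)
              calc |e (m+1) x - e (m+1) y| ≤ |e (m+1) x| + |e (m+1) y| := abs_sub _ _
                _ ≤ 2*(C*θ^m) := by have := heB m x; have := heB m y; linarith
          _ = 2*(C*(1-θ)⁻¹) := by rw [tsum_mul_left, htsum]
      by_cases hn2 : n ≤ 1
      -- small n : use the uniform bound
      · have hUb : |Φ x - Φ y| ≤ U := by
          have h1 : |φ (T x) - φ (T y)| ≤ 2*|φ z| := by
            have := hM (T x); have := hM (T y)
            calc |φ (T x) - φ (T y)| ≤ |φ (T x)| + |φ (T y)| := abs_sub _ _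
              _ ≤ 2*|φ z| := by linarith
          have h2 : |e 0 x - e 0 y| ≤ 4*|φ z| := by
            have hb1 : ∀ w, |e 0 w| ≤ 2*|φ z| := by
              intro w
              rw [hee]
              have := hM (S^[0+1] (T w)); have := hM (S^[0] (T (S w)))
              calc |φ (S^[0+1] (T w)) - φ (S^[0] (T (S w)))|
                  ≤ |φ (S^[0+1] (T w))| + |φ (S^[0] (T (S w)))| := abs_sub _ _
                _ ≤ 2*|φ z| := by linarith
            have := hb1 x; have := hb1 y
            calc |e 0 x - e 0 y| ≤ |e 0 x| + |e 0 y| := abs_sub _ _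
              _ ≤ 4*|φ z| := by linarith
          rw [hUdef]
          linarith
        have hsn : s ≤ s^n := by
          interval_cases n
          · simpa using hs1.le
          · simp
        calc |Φ x - Φ y| ≤ U := hUb
          _ = U/s * s := (div_mul_cancel₀ U hs0.ne').symm
          _ ≤ U/s * s^n := mul_le_mul_of_nonneg_left hsn (div_nonneg hU0.le hs0.le)
          _ ≤ (U/s + V) * s^n := by
              rw [show (U/s + V) * s^n = V*s^n + U/s*s^n by ring]
              exact le_add_of_nonneg_left (mul_nonneg hV0.le (pow_nonneg hs0.le n))
      -- large n : use the decay bounds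
      · push_neg at hn2
        have hn2' : 2 ≤ n := hn2
        have hTag : ∀ k : ℤ, |k| ≤ (n : ℤ) → (T x).val k = (T y).val k :=
          agreeT n (by omega) x y hxy
        have hTS : ∀ k : ℤ, |k| ≤ ((n-1 : ℕ) : ℤ) → (T (S x)).val k = (T (S y)).val k := by
          refine agreeT (n-1) (by omega) (S x) (S y) (fun k hk => ?_)
          rw [Sval, Sval]
          apply hxy
          rw [abs_le] at hk ⊢
          omega
        have hB1 : |φ (T x) - φ (T y)| ≤ C*θ^n := hvar n _ _ hTag
        have hB2 : |e 0 x - e 0 y| ≤ 2*(C*θ^(n-1)) := by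
          have hp1 : |φ (S^[0+1] (T x)) - φ (S^[0+1] (T y))| ≤ C*θ^(n-1) := by
            refine hvar (n-1) _ _ (agreeIter (0+1) (n-1) _ _ (fun k hk => hTag k ?_))
            rw [abs_le] at hk ⊢
            omega
          have hp2 : |φ (S^[0] (T (S x))) - φ (S^[0] (T (S y)))| ≤ C*θ^(n-1) := by
            refine hvar (n-1) _ _ (agreeIter 0 (n-1) _ _ (fun k hk => hTS k ?_))
            rw [abs_le] at hk ⊢
            omega
          have h3 : e 0 x - e 0 y = (φ (S^[0+1] (T x)) - φ (S^[0+1] (T y)))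
              - (φ (S^[0] (T (S x))) - φ (S^[0] (T (S y)))) := by
            rw [hee, hee]; ring
          rw [h3]
          exact le_trans (abs_sub _ _) (by linarith)
        have hterm : ∀ m : ℕ, m + 2 ≤ n →
            |e (m+1) x - e (m+1) y| ≤ 2*(C*θ^(n-m-2)) := by
          intro m hm
          have hp1 : |φ (S^[m+1+1] (T x)) - φ (S^[m+1+1] (T y))| ≤ C*θ^(n-m-2) := by
            refine hvar (n-m-2) _ _ (agreeIter (m+1+1) (n-m-2) _ _ (fun k hk => hTag k ?_))
            rw [abs_le] at hk ⊢
            omega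
          have hp2 : |φ (S^[m+1] (T (S x))) - φ (S^[m+1] (T (S y)))| ≤ C*θ^(n-m-2) := by
            refine hvar (n-m-2) _ _ (agreeIter (m+1) (n-m-2) _ _ (fun k hk => hTS k ?_))
            rw [abs_le] at hk ⊢
            omega
          have h3 : e (m+1) x - e (m+1) y = (φ (S^[m+1+1] (T x)) - φ (S^[m+1+1] (T y)))
              - (φ (S^[m+1] (T (S x))) - φ (S^[m+1] (T (S y)))) := by
            rw [hee, hee]; ring
          rw [h3]
          exact le_trans (abs_sub _ _) (by linarith)
        -- split the series at n/2
        have hsum3 : |∑' m, (e (m+1) x - e (m+1) y)|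
            ≤ 2*(C*(1-θ)⁻¹)*θ^(n - n/2 - 1) + 2*(C*(1-θ)⁻¹)*θ^(n/2) := by
          rw [← Summable.sum_add_tsum_nat_add (n/2) hgsum]
          have hhead : |∑ m ∈ Finset.range (n/2), (e (m+1) x - e (m+1) y)|
              ≤ 2*(C*(1-θ)⁻¹)*θ^(n - n/2 - 1) := by
            calc |∑ m ∈ Finset.range (n/2), (e (m+1) x - e (m+1) y)|
                ≤ ∑ m ∈ Finset.range (n/2), |e (m+1) x - e (m+1) y| :=
                  Finset.abs_sum_le_sum_abs _ _
              _ ≤ ∑ m ∈ Finset.range (n/2), 2*(C*θ^(n-m-2)) := by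
                  refine Finset.sum_le_sum (fun m hm => ?_)
                  rw [Finset.mem_range] at hm
                  exact hterm m (by omega)
              _ = (2*C*θ^(n - n/2 - 1)) * ∑ m ∈ Finset.range (n/2), θ^(n/2 - 1 - m) := by
                  rw [Finset.mul_sum]
                  refine Finset.sum_congr rfl (fun m hm => ?_)
                  rw [Finset.mem_range] at hm
                  rw [show n - m - 2 = n - n/2 - 1 + (n/2 - 1 - m) by omega, pow_add]
                  ring
              _ ≤ (2*C*θ^(n - n/2 - 1)) * (1-θ)⁻¹ := by
                  refine mul_le_mul_of_nonneg_left ?_ (by positivity)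
                  rw [Finset.sum_range_reflect (fun j => θ^j) (n/2)]
                  calc ∑ m ∈ Finset.range (n/2), θ^m
                      ≤ ∑' m : ℕ, θ^m := Summable.sum_le_tsum _ (fun i _ => pow_nonneg hθ0.le i)
                        (summable_geometric_of_lt_one hθ0.le hθ1)
                    _ = (1-θ)⁻¹ := tsum_geometric_of_lt_one hθ0.le hθ1
              _ = 2*(C*(1-θ)⁻¹)*θ^(n - n/2 - 1) := by ring
          have htail : |∑' m : ℕ, (e (m + n/2 + 1) x - e (m + n/2 + 1) y)|
              ≤ 2*(C*(1-θ)⁻¹)*θ^(n/2) := by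
            have hshift : Summable (fun m : ℕ => e (m + n/2 + 1) x - e (m + n/2 + 1) y) :=
              (summable_nat_add_iff (n/2)).mpr hgsum
            have hgeo2 : Summable (fun m : ℕ => 2*C*θ^(n/2) * θ^m) :=
              (summable_geometric_of_lt_one hθ0.le hθ1).mul_left _
            calc |∑' m : ℕ, (e (m + n/2 + 1) x - e (m + n/2 + 1) y)|
                ≤ ∑' m : ℕ, |e (m + n/2 + 1) x - e (m + n/2 + 1) y| :=
                  habs_tsum _ hshift
              _ ≤ ∑' m : ℕ, 2*C*θ^(n/2) * θ^m := by
                  refine Summable.tsum_le_tsum (fun m => ?_) hshift.abs hgeo2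
                  have h1 := heB (m + n/2) x
                  have h2 := heB (m + n/2) y
                  have h3 : (θ:ℝ)^(m + n/2) = θ^(n/2) * θ^m := by
                    rw [pow_add]; ring
                  rw [h3] at h1 h2
                  calc |e (m + n/2 + 1) x - e (m + n/2 + 1) y|
                      ≤ |e (m + n/2 + 1) x| + |e (m + n/2 + 1) y| := abs_sub _ _
                    _ ≤ 2*C*θ^(n/2) * θ^m := by linarith
              _ = 2*(C*(1-θ)⁻¹)*θ^(n/2) := by
                  rw [tsum_mul_left, tsum_geometric_of_lt_one hθ0.le hθ1]
                  ring
          calc |∑ m ∈ Finset.range (n/2), (e (m+1) x - e (m+1) y)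
              + ∑' m : ℕ, (e (m + n/2 + 1) x - e (m + n/2 + 1) y)|
              ≤ |∑ m ∈ Finset.range (n/2), (e (m+1) x - e (m+1) y)|
              + |∑' m : ℕ, (e (m + n/2 + 1) x - e (m + n/2 + 1) y)| := abs_add_le _ _
            _ ≤ 2*(C*(1-θ)⁻¹)*θ^(n - n/2 - 1) + 2*(C*(1-θ)⁻¹)*θ^(n/2) := by
                linarith
        -- convert everything to powers of s
        have hc1 : C*θ^n ≤ C*s^n :=
          mul_le_mul_of_nonneg_left (hpow n n (by omega)) hC.le
        have hc2 : 2*(C*θ^(n-1)) ≤ 2*C*s^n := by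
          have := hpow (n-1) n (by omega)
          nlinarith
        have hc3 : 2*(C*(1-θ)⁻¹)*θ^(n - n/2 - 1) ≤ 2*(C*(1-θ)⁻¹)/θ * s^n := by
          have h1 : θ * θ^(n - n/2 - 1) = θ^(n - n/2) := by
            rw [← pow_succ']
            congr 1
            omega
          have h2 : θ^(n - n/2) ≤ s^n := hpow (n - n/2) n (by omega)
          rw [div_mul_eq_mul_div, le_div_iff₀ hθ0]
          calc 2*(C*(1-θ)⁻¹)*θ^(n - n/2 - 1) * θ = 2*(C*(1-θ)⁻¹) * (θ * θ^(n - n/2 - 1)) := by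
                ring
            _ = 2*(C*(1-θ)⁻¹) * θ^(n - n/2) := by rw [h1]
            _ ≤ 2*(C*(1-θ)⁻¹) * s^n := by
                refine mul_le_mul_of_nonneg_left h2 ?_
                positivity
        have hc4 : 2*(C*(1-θ)⁻¹)*θ^(n/2) ≤ 2*(C*(1-θ)⁻¹)/s * s^n := by
          have h1 : s * θ^(n/2) = s^(2*(n/2)+1) := by
            rw [pow_succ']
            congr 1
            rw [pow_mul, hsdef, Real.sq_sqrt hθ0.le]
          have h2 : s^(2*(n/2)+1) ≤ s^n := pow_le_pow_of_le_one hs0.le hs1.le (by omega)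
          rw [div_mul_eq_mul_div, le_div_iff₀ hs0]
          calc 2*(C*(1-θ)⁻¹)*θ^(n/2) * s = 2*(C*(1-θ)⁻¹) * (s * θ^(n/2)) := by ring
            _ = 2*(C*(1-θ)⁻¹) * s^(2*(n/2)+1) := by rw [h1]
            _ ≤ 2*(C*(1-θ)⁻¹) * s^n := by
                refine mul_le_mul_of_nonneg_left h2 ?_
                positivity
        have hfin : |Φ x - Φ y| ≤ V * s^n := by
          rw [hVdef]
          have := habs
          have := hsum3
          nlinarith
        have hrest : 0 ≤ U/s * s^n :=
          mul_nonneg (div_nonneg hU0.le hs0.le) (pow_nonneg hs0.le n)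
        calc |Φ x - Φ y| ≤ V * s^n := hfin
          _ ≤ (U/s + V) * s^n := by
              rw [show (U/s + V) * s^n = U/s*s^n + V*s^n by ring]
              exact le_add_of_nonneg_left hrest
  · refine ⟨φ, 0, ?_, ?_, continuous_const, 1, one_pos, ?_⟩
    · intro x; exact absurd ⟨x⟩ hne
    · intro x; exact absurd ⟨x⟩ hne
    · intro n x; exact absurd ⟨x⟩ hne
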